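/- arXiv:1109.0591 — 7 statements merged into one kernel-verified Lean document; each statement's English description precedes it below -/
import Mathlib

section
/- Let F be a Čech 2-cochain on an open cover W of a space Z with values in ℤ^n, and define the 3-cochain C(F) with values in strictly upper triangular n×n integer matrices by C(F)_{λ0λ1λ2λ3}(z)_{ij} := F_{λ0λ1λ2}(z)_i · F_{λ0λ2λ3}(z)_j − F_{λ1λ2λ3}(z)_i · F_{λ0λ1λ3}(z)_j. Then the Čech differential of C(F) satisfies (∂̌ C(F))_{ij} = (F_i ∪ F_j) − (F_j ∪ F_i), where ∪ denotes the Čech cup product of the i-th and j-th component 2-cochains. -/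
/- STATEMENT 0: Čech cochains on an open cover are modelled as totally defined
functions on tuples of indices and points.  `F` is a ℤⁿ-valued 2-cocycle,
`CF = C(F)` is the Steenrod 3-cochain with values in (strictly upper triangular)
matrices, and the claim is `∂̌ C(F)_{ij} = F_i ∪ F_j - F_j ∪ F_i`, where both the
Čech differential and the cup product of 2-cochains are written out explicitly. -/
theorem stmt_0 {ι Z : Type*} {n : ℕ}
    (F : ι → ι → ι → Z → Fin n → ℤ)
    -- F is a Čech 2-cocycle: ∂̌F = 0
    (hF : ∀ (a b c d : ι) (z : Z) (l : Fin n),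
      F b c d z l - F a c d z l + F a b d z l - F a b c z l = 0)
    -- the 3-cochain C(F)
    (CF : ι → ι → ι → ι → Z → Fin n → Fin n → ℤ)
    (hCF : ∀ (a b c d : ι) (z : Z) (i j : Fin n),
      CF a b c d z i j = F a b c z i * F a c d z j - F b c d z i * F a b d z j)
    (i j : Fin n) (a b c d e : ι) (z : Z) :
    -- (∂̌ C(F))_{abcde}(z)_{ij} = (F_i ∪ F_j)_{abcde}(z) - (F_j ∪ F_i)_{abcde}(z)
    CF b c d e z i j - CF a c d e z i j + CF a b d e z i j - CF a b c e z i j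
        + CF a b c d z i j
      = F a b c z i * F c d e z j - F a b c z j * F c d e z i := by
  have h1 : ∀ l, F b c d z l = F a c d z l - F a b d z l + F a b c z l :=
    fun l => by linarith [hF a b c d z l]
  have h2 : ∀ l, F b c e z l = F a c e z l - F a b e z l + F a b c z l :=
    fun l => by linarith [hF a b c e z l]
  have h3 : ∀ l, F b d e z l = F a d e z l - F a b e z l + F a b d z l :=
    fun l => by linarith [hF a b d e z l]
  have h4 : ∀ l, F c d e z l = F a d e z l - F a c e z l + F a c d z l :=
    fun l => by linarith [hF a c d e z l]
  simp only [hCF, h1, h2, h3, h4]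
  ring
end

section
/- With the dimensionally reduced cochain complex C^k_F(W, ℤ) (triples of Čech cochains with values in ℤ, ℤ^n, and strictly upper triangular integer matrices M_n^u(ℤ)) and differential D_F(φ^{k0}, φ^{(k-1)1}, φ^{(k-2)2}) := (∂̌φ^{k0} + (−1)^{k+1} φ^{(k-1)1} ∪₁ F + (−1)^{k+1} φ^{(k-2)2} ∪₂ C(F), ∂̌φ^{(k-1)1} + (−1)^k φ^{(k-2)2} ∪₁ F, ∂̌φ^{(k-2)2}), one has D_F ∘ D_F = 0, given that F is a 2-cocycle with values in ℤ^n and ∂̌C(F)_{ij} = F_i ∪ F_j − F_j ∪ F_i. -/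
/-- A Čech `k`-cochain on a cover indexed by `ι` of a space `Z`, with values in `A`,
modelled as a totally defined function of a `(k+1)`-tuple of indices and a point. -/
abbrev Cochain (ι Z A : Type*) (k : ℕ) := (Fin (k + 1) → ι) → Z → A

/-- The Čech differential `(∂̌φ)_{λ₀…λ_{k+1}} = Σ_l (-1)^l φ_{λ₀…λ̂_l…λ_{k+1}}`. -/
def cechD {ι Z A : Type*} [AddCommGroup A] {k : ℕ} (φ : Cochain ι Z A k) :
    Cochain ι Z A (k + 1) :=
  fun σ z => ∑ l : Fin (k + 2), ((-1 : ℤ) ^ (l : ℕ)) • φ (σ ∘ l.succAbove) z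

/-- The Steenrod cochain `C(F)_{λ₀λ₁λ₂λ₃}(z)_{ij}
  = F_{λ₀λ₁λ₂}(z)_i F_{λ₀λ₂λ₃}(z)_j − F_{λ₁λ₂λ₃}(z)_i F_{λ₀λ₁λ₃}(z)_j`. -/
def CFm {ι Z : Type*} {n : ℕ} (F : ι → ι → ι → Z → Fin n → ℤ) :
    ι → ι → ι → ι → Z → Fin n → Fin n → ℤ :=
  fun a b c d z i j => F a b c z i * F a c d z j - F b c d z i * F a b d z j

/-- `φ ∪₁ F` for a ℤⁿ-valued `k`-cochain `φ`:
`(φ ∪₁ F)_{λ₀…λ_{k+2}}(z) = Σ_l φ_{λ₀…λ_k}(z)_l F_{λ_k λ_{k+1} λ_{k+2}}(z)_l`. -/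
def cup1v {ι Z : Type*} {n k : ℕ} (φ : Cochain ι Z (Fin n → ℤ) k)
    (F : ι → ι → ι → Z → Fin n → ℤ) : Cochain ι Z ℤ (k + 2) :=
  fun σ z => ∑ l : Fin n,
    φ (fun i : Fin (k + 1) => σ (Fin.castLE (by omega) i)) z l *
      F (σ ⟨k, by omega⟩) (σ ⟨k + 1, by omega⟩) (σ ⟨k + 2, by omega⟩) z l

/-- `ψ ∪₁ F` for a matrix-valued `k`-cochain `ψ`:
`(ψ ∪₁ F)_{λ₀…λ_{k+2}}(z)_l
  = Σ_{i<j} ψ_{λ₀…λ_k}(z)_{ij} (F_{λ_k λ_{k+1} λ_{k+2}}(z)_i (e_l)_j − (e_l)_i F(z)_j)`. -/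
def cup1m {ι Z : Type*} {n k : ℕ} (ψ : Cochain ι Z (Fin n → Fin n → ℤ) k)
    (F : ι → ι → ι → Z → Fin n → ℤ) : Cochain ι Z (Fin n → ℤ) (k + 2) :=
  fun σ z l => ∑ i : Fin n, ∑ j : Fin n,
    if i < j then
      ψ (fun i' : Fin (k + 1) => σ (Fin.castLE (by omega) i')) z i j *
        (F (σ ⟨k, by omega⟩) (σ ⟨k + 1, by omega⟩) (σ ⟨k + 2, by omega⟩) z i *
            (if l = j then 1 else 0)
          - (if l = i then 1 else 0) *
            F (σ ⟨k, by omega⟩) (σ ⟨k + 1, by omega⟩) (σ ⟨k + 2, by omega⟩) z j)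
    else 0

/-- `ψ ∪₂ C(F)` for a matrix-valued `k`-cochain `ψ`:
`(ψ ∪₂ C(F))_{λ₀…λ_{k+3}}(z) = Σ_{i<j} ψ_{λ₀…λ_k}(z)_{ij} C(F)_{λ_k…λ_{k+3}}(z)_{ij}`. -/
def cup2m {ι Z : Type*} {n k : ℕ} (ψ : Cochain ι Z (Fin n → Fin n → ℤ) k)
    (F : ι → ι → ι → Z → Fin n → ℤ) : Cochain ι Z ℤ (k + 3) :=
  fun σ z => ∑ i : Fin n, ∑ j : Fin n,
    if i < j then
      ψ (fun i' : Fin (k + 1) => σ (Fin.castLE (by omega) i')) z i j *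
        CFm F (σ ⟨k, by omega⟩) (σ ⟨k + 1, by omega⟩) (σ ⟨k + 2, by omega⟩)
          (σ ⟨k + 3, by omega⟩) z i j
    else 0

/-- The differential `D_F` of the dimensionally reduced complex with integer
coefficients, on a triple of total degree `K+2`
(components of Čech degrees `K+2`, `K+1`, `K`). -/
def DF {ι Z : Type*} {n : ℕ} (K : ℕ) (F : ι → ι → ι → Z → Fin n → ℤ)
    (t : Cochain ι Z ℤ (K + 2) × Cochain ι Z (Fin n → ℤ) (K + 1) ×
         Cochain ι Z (Fin n → Fin n → ℤ) K) :
    Cochain ι Z ℤ (K + 3) × Cochain ι Z (Fin n → ℤ) (K + 2) ×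
      Cochain ι Z (Fin n → Fin n → ℤ) (K + 1) :=
  (cechD t.1 + ((-1 : ℤ) ^ (K + 3)) • cup1v t.2.1 F
      + ((-1 : ℤ) ^ (K + 3)) • cup2m t.2.2 F,
    cechD t.2.1 + ((-1 : ℤ) ^ (K + 2)) • cup1m t.2.2 F,
    cechD t.2.2)

section AuxLemmas

lemma succAbove_val' {N : ℕ} (p : Fin (N+1)) (i : Fin N) :
    (p.succAbove i).val = if i.val < p.val then i.val else i.val + 1 := by
  rw [Fin.succAbove]
  by_cases h : i.val < p.val
  · rw [if_pos (by simpa [Fin.lt_def] using h), if_pos h]; rfl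
  · rw [if_neg (by simpa [Fin.lt_def] using h), if_neg h]; rfl

lemma cechD_cechD {ι Z A : Type*} [AddCommGroup A] {k : ℕ} (φ : Cochain ι Z A k) :
    cechD (cechD φ) = 0 := by
  funext σ z
  show ∑ l : Fin (k + 3), ((-1 : ℤ) ^ (l : ℕ)) • cechD φ (σ ∘ l.succAbove) z = 0
  simp only [cechD, Finset.smul_sum, smul_smul, ← pow_add]
  rw [← Finset.sum_product']
  refine Finset.sum_ninvolution
    (fun p => if h : p.2.val < p.1.val then (⟨p.2.val, by omega⟩, ⟨p.1.val - 1, by omega⟩)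
      else (⟨p.2.val + 1, by omega⟩, ⟨p.1.val, by have := p.2.2; have := p.1.2; omega⟩))
    ?_ ?_ (fun _ => Finset.mem_univ _) ?_
  · rintro ⟨l, m⟩
    by_cases h : m.val < l.val <;> simp only [h, dite_true, dite_false]
    · have harg : (σ ∘ l.succAbove) ∘ m.succAbove
          = (σ ∘ Fin.succAbove ⟨m.val, by omega⟩) ∘ Fin.succAbove ⟨l.val - 1, by omega⟩ := by
        funext i
        simp only [Function.comp_apply]
        congr 1
        apply Fin.ext
        simp only [succAbove_val']
        split_ifs <;> omega
      rw [harg]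
      have hsign : ((-1 : ℤ)) ^ ((l : ℕ) + (m : ℕ))
          = -((-1 : ℤ) ^ ((⟨m.val, by omega⟩ : Fin (k+3)) : ℕ)
              * ((-1 : ℤ) ^ ((⟨l.val - 1, by omega⟩ : Fin (k+2)) : ℕ))) := by
        simp only [← pow_add]
        have : (l : ℕ) + (m : ℕ) = ((m : ℕ) + ((l : ℕ) - 1)) + 1 := by omega
        rw [this, pow_succ]; ring
      rw [hsign, ← pow_add, neg_smul, neg_add_cancel]
    · have harg : (σ ∘ l.succAbove) ∘ m.succAbove
          = (σ ∘ Fin.succAbove ⟨m.val + 1, by omega⟩)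
              ∘ Fin.succAbove ⟨l.val, by have := m.2; omega⟩ := by
        funext i
        simp only [Function.comp_apply]
        congr 1
        apply Fin.ext
        simp only [succAbove_val']
        split_ifs <;> omega
      rw [harg]
      have hsign : ((-1 : ℤ)) ^ ((l : ℕ) + (m : ℕ))
          = -((-1 : ℤ) ^ ((⟨m.val + 1, by omega⟩ : Fin (k+3)) : ℕ)
              * ((-1 : ℤ) ^ ((⟨l.val, by have := m.2; omega⟩ : Fin (k+2)) : ℕ))) := by
        simp only [← pow_add]
        have : ((m : ℕ) + 1) + (l : ℕ) = ((l : ℕ) + (m : ℕ)) + 1 := by omega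
        rw [this, pow_succ]; ring
      rw [hsign, ← pow_add, neg_smul, neg_add_cancel]
  · rintro ⟨l, m⟩ _ hne
    by_cases h : m.val < l.val <;>
      simp only [h, dite_true, dite_false, Prod.mk.injEq] at hne <;>
      have := congrArg Fin.val hne.1 <;> simp at this <;> omega
  · rintro ⟨l, m⟩
    have hm := m.isLt
    by_cases h : m.val < l.val <;> simp only [h, dite_true, dite_false] <;>
      split_ifs with h2 <;> simp -failIfUnchanged only [Fin.val_mk] at h2 ⊢ <;>
      first
        | omega
        | (refine Prod.ext (Fin.ext ?_) (Fin.ext ?_) <;> simp <;> omega)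

lemma leibniz {ι Z A B C : Type*} [AddCommGroup A] [AddCommGroup B] [AddCommGroup C]
    (m : A →+ B →+ C) {p q : ℕ} (f : Cochain ι Z A p) (g : Cochain ι Z B q)
    (σ : Fin (p + q + 2) → ι) (z : Z) :
    cechD (fun τ z => m (f (fun i : Fin (p+1) => τ (Fin.castLE (by omega) i)) z)
        (g (fun i : Fin (q+1) => τ ⟨p + i, by omega⟩) z)) σ z
      = m (cechD f (fun i : Fin (p+2) => σ (Fin.castLE (by omega) i)) z)
          (g (fun i : Fin (q+1) => σ ⟨p + 1 + i, by omega⟩) z)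
        + ((-1:ℤ)^p) • m (f (fun i : Fin (p+1) => σ (Fin.castLE (by omega) i)) z)
            (cechD g (fun i : Fin (q+2) => σ ⟨p + i, by omega⟩) z) := by
  classical
  set a : A := f (fun i : Fin (p+1) => σ (Fin.castLE (by omega) i)) z with ha
  set b : B := g (fun i : Fin (q+1) => σ ⟨p + 1 + i, by omega⟩) z with hb
  set T : ℕ → C := fun l => ((-1:ℤ)^l) •
    m (f (fun i : Fin (p+1) => σ ⟨if i.val < l then i.val else i.val + 1,
          by split_ifs <;> omega⟩) z)
      (g (fun i : Fin (q+1) => σ ⟨if p + i.val < l then p + i.val else p + i.val + 1,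
          by split_ifs <;> omega⟩) z) with hT
  set T1 : ℕ → C := fun l => ((-1:ℤ)^l) •
    m (f (fun i : Fin (p+1) => σ ⟨if i.val < l then i.val else i.val + 1,
          by split_ifs <;> omega⟩) z) b with hT1
  set T2 : ℕ → C := fun j => ((-1:ℤ)^j) •
    m a (g (fun i : Fin (q+1) => σ ⟨if i.val < j then p + i.val else p + i.val + 1,
          by split_ifs <;> omega⟩) z) with hT2
  have hLHS : cechD (fun τ z => m (f (fun i : Fin (p+1) => τ (Fin.castLE (by omega) i)) z)
        (g (fun i : Fin (q+1) => τ ⟨p + i, by omega⟩) z)) σ z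
      = ∑ l ∈ Finset.range (p+q+2), T l := by
    rw [cechD, ← Fin.sum_univ_eq_sum_range]
    refine Finset.sum_congr rfl (fun l _ => ?_)
    have e1 : (fun i : Fin (p+1) => (σ ∘ l.succAbove) (Fin.castLE (by omega) i))
        = (fun i : Fin (p+1) => σ ⟨if i.val < l.val then i.val else i.val + 1,
            by split_ifs <;> omega⟩) := by
      funext i; simp only [Function.comp_apply]; congr 1; apply Fin.ext
      simp [succAbove_val']
    have e2 : (fun i : Fin (q+1) => (σ ∘ l.succAbove) (⟨p + i, by omega⟩ : Fin (p+q+1)))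
        = (fun i : Fin (q+1) => σ ⟨if p + i.val < l.val then p + i.val else p + i.val + 1,
            by split_ifs <;> omega⟩) := by
      funext i; simp only [Function.comp_apply]; congr 1; apply Fin.ext
      simp [succAbove_val']
    rw [hT, e1, e2]
  have hR1 : m (cechD f (fun i : Fin (p+2) => σ (Fin.castLE (by omega) i)) z) b
      = ∑ l ∈ Finset.range (p+2), T1 l := by
    rw [← AddMonoidHom.flip_apply, cechD, map_sum, ← Fin.sum_univ_eq_sum_range]
    refine Finset.sum_congr rfl (fun l _ => ?_)
    rw [map_zsmul, AddMonoidHom.flip_apply, hT1]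
    have e1 : ((fun i : Fin (p+2) => σ (Fin.castLE (by omega) i)) ∘ l.succAbove)
        = (fun i : Fin (p+1) => σ ⟨if i.val < l.val then i.val else i.val + 1,
            by split_ifs <;> omega⟩) := by
      funext i
      show σ _ = σ _
      congr 1
      apply Fin.ext
      simp [succAbove_val']
    rw [e1]
  have hR2 : m a (cechD g (fun i : Fin (q+2) => σ (⟨p + i, by omega⟩ : Fin (p+q+2))) z)
      = ∑ j ∈ Finset.range (q+2), T2 j := by
    rw [cechD, map_sum, ← Fin.sum_univ_eq_sum_range]
    refine Finset.sum_congr rfl (fun j _ => ?_)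
    rw [map_zsmul, hT2]
    have e2 : ((fun i : Fin (q+2) => σ (⟨p + i, by omega⟩ : Fin (p+q+2))) ∘ j.succAbove)
        = (fun i : Fin (q+1) => σ ⟨if i.val < j.val then p + i.val else p + i.val + 1,
            by split_ifs <;> omega⟩) := by
      funext i
      show σ _ = σ _
      congr 1
      apply Fin.ext
      simp only [succAbove_val']
      split_ifs <;> rfl
    rw [e2]
  have h1 : ∑ l ∈ Finset.range (p+1), T l = ∑ l ∈ Finset.range (p+1), T1 l := by
    refine Finset.sum_congr rfl (fun l hl => ?_)
    rw [Finset.mem_range] at hl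
    simp only [hT, hT1]
    congr 2
    rw [hb]
    congr 1
    funext i
    congr 1
    apply Fin.ext
    simp only
    rw [if_neg (by omega)]
    omega
  have h2 : T1 (p+1) + ((-1:ℤ)^p) • T2 0 = 0 := by
    rw [hT1, hT2]
    simp only [smul_smul, ← pow_add]
    have hfa : (fun i : Fin (p+1) => σ ⟨if i.val < p+1 then i.val else i.val + 1,
        by split_ifs <;> omega⟩) = (fun i : Fin (p+1) => σ (Fin.castLE (by omega) i)) := by
      funext i
      congr 1
      apply Fin.ext
      simp only [Fin.castLE]
      rw [if_pos (by omega)]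
    have hgb : (fun i : Fin (q+1) => σ ⟨if i.val < 0 then p + i.val else p + i.val + 1,
        by split_ifs <;> omega⟩) = (fun i : Fin (q+1) => σ ⟨p + 1 + i, by omega⟩) := by
      funext i
      congr 1
      apply Fin.ext
      simp only
      rw [if_neg (by omega)]
      omega
    rw [hfa, hgb, ← ha, ← hb]
    have : ((-1:ℤ)^(p+1)) = -((-1:ℤ)^(p+0)) := by rw [pow_succ]; ring
    rw [this, neg_smul, neg_add_cancel]
  have h3 : ∑ j ∈ Finset.range (q+1), T (p+1+j)
      = ∑ j ∈ Finset.range (q+1), ((-1:ℤ)^p) • T2 (j+1) := by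
    refine Finset.sum_congr rfl (fun j hj => ?_)
    rw [Finset.mem_range] at hj
    simp only [hT, hT2]
    rw [smul_smul, ← pow_add]
    congr 1
    · congr 1
      omega
    · congr 1
      · have e : (fun i : Fin (p+1) => σ ⟨if i.val < p+1+j then i.val else i.val + 1,
            by split_ifs <;> omega⟩) = (fun i : Fin (p+1) => σ (Fin.castLE (by omega) i)) := by
          funext i
          congr 1
          apply Fin.ext
          simp only [Fin.castLE]
          rw [if_pos (by omega)]
        rw [ha, e]
      · congr 1
        funext i
        congr 1
        apply Fin.ext
        simp only
        split_ifs <;> omega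
  rw [hLHS, hR1, hR2]
  rw [← Finset.sum_range_add_sum_Ico T (show p+1 ≤ p+q+2 by omega),
    Finset.sum_Ico_eq_sum_range]
  rw [Finset.sum_range_succ T1, Finset.sum_range_succ' T2]
  rw [show p+q+2-(p+1) = q+1 from by omega, smul_add]
  rw [h1, h3, Finset.smul_sum]
  have key : ∀ (X Y u v : C), u + v = 0 → X + u + (Y + v) = X + Y := by
    intro X Y u v h
    rw [show X + u + (Y + v) = X + Y + (u + v) from by abel, h, add_zero]
  exact (key _ _ _ _ h2).symm

section Bilinear
variable {ι Z : Type*} {n : ℕ}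

def m1 : (Fin n → ℤ) →+ (Fin n → ℤ) →+ ℤ :=
  AddMonoidHom.mk' (fun a => AddMonoidHom.mk' (fun b => ∑ l, a l * b l)
    (by intro x y; simp [mul_add, Finset.sum_add_distrib]))
    (by intro x y
        refine AddMonoidHom.ext fun b => ?_
        simp [add_mul, Finset.sum_add_distrib])

def m2 : (Fin n → Fin n → ℤ) →+ (Fin n → ℤ) →+ (Fin n → ℤ) :=
  AddMonoidHom.mk' (fun a => AddMonoidHom.mk' (fun b l => ∑ i, ∑ j,
      if i < j then a i j * (b i * (if l = j then 1 else 0) - (if l = i then 1 else 0) * b j)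
      else 0)
    (by
      intro x y; funext l
      simp only [Pi.add_apply, ← Finset.sum_add_distrib]
      refine Finset.sum_congr rfl fun i _ => ?_
      refine Finset.sum_congr rfl fun j _ => ?_
      split_ifs <;> ring))
    (by
      intro x y
      refine AddMonoidHom.ext fun b => ?_
      funext l
      simp only [AddMonoidHom.mk'_apply, AddMonoidHom.add_apply, Pi.add_apply,
        ← Finset.sum_add_distrib]
      refine Finset.sum_congr rfl fun i _ => ?_
      refine Finset.sum_congr rfl fun j _ => ?_
      split_ifs <;> ring)

def m3 : (Fin n → Fin n → ℤ) →+ (Fin n → Fin n → ℤ) →+ ℤ :=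
  AddMonoidHom.mk' (fun a => AddMonoidHom.mk' (fun b => ∑ i, ∑ j,
      if i < j then a i j * b i j else 0)
    (by
      intro x y
      simp only [Pi.add_apply, ← Finset.sum_add_distrib]
      refine Finset.sum_congr rfl fun i _ => ?_
      refine Finset.sum_congr rfl fun j _ => ?_
      split_ifs <;> ring))
    (by
      intro x y
      refine AddMonoidHom.ext fun b => ?_
      simp only [AddMonoidHom.mk'_apply, AddMonoidHom.add_apply, Pi.add_apply,
        ← Finset.sum_add_distrib]
      refine Finset.sum_congr rfl fun i _ => ?_
      refine Finset.sum_congr rfl fun j _ => ?_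
      split_ifs <;> ring)

variable (F : ι → ι → ι → Z → Fin n → ℤ)

def g2 : Cochain ι Z (Fin n → ℤ) 2 := fun τ z => F (τ 0) (τ 1) (τ 2) z

def g3 : Cochain ι Z (Fin n → Fin n → ℤ) 3 :=
  fun τ z => CFm F (τ 0) (τ 1) (τ 2) (τ 3) z

lemma dg2 (hF : ∀ (a b c d : ι) (z : Z) (l : Fin n),
      F b c d z l - F a c d z l + F a b d z l - F a b c z l = 0)
    (τ : Fin 4 → ι) (z : Z) : cechD (g2 F) τ z = 0 := by
  have c0 : g2 F (τ ∘ (0:Fin 4).succAbove) z = F (τ 1) (τ 2) (τ 3) z := rfl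
  have c1 : g2 F (τ ∘ (1:Fin 4).succAbove) z = F (τ 0) (τ 2) (τ 3) z := rfl
  have c2 : g2 F (τ ∘ (2:Fin 4).succAbove) z = F (τ 0) (τ 1) (τ 3) z := rfl
  have c3 : g2 F (τ ∘ (3:Fin 4).succAbove) z = F (τ 0) (τ 1) (τ 2) z := rfl
  show (∑ l : Fin 4, ((-1:ℤ)^(l:ℕ)) • g2 F (τ ∘ l.succAbove) z) = 0
  rw [Fin.sum_univ_four, c0, c1, c2, c3]
  simp only [show ((0:Fin 4):ℕ) = 0 from rfl, show ((1:Fin 4):ℕ) = 1 from rfl,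
    show ((2:Fin 4):ℕ) = 2 from rfl, show ((3:Fin 4):ℕ) = 3 from rfl]
  funext w
  have h := hF (τ 0) (τ 1) (τ 2) (τ 3) z w
  simp only [Pi.add_apply, Pi.smul_apply, smul_eq_mul, Pi.zero_apply]
  norm_num
  linarith

lemma dg3 (hCF : ∀ (a b c d e : ι) (z : Z) (i j : Fin n),
      CFm F b c d e z i j - CFm F a c d e z i j + CFm F a b d e z i j
          - CFm F a b c e z i j + CFm F a b c d z i j
        = F a b c z i * F c d e z j - F a b c z j * F c d e z i)
    (τ : Fin 5 → ι) (z : Z) :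
    cechD (g3 F) τ z = fun i j =>
      F (τ 0) (τ 1) (τ 2) z i * F (τ 2) (τ 3) (τ 4) z j
        - F (τ 0) (τ 1) (τ 2) z j * F (τ 2) (τ 3) (τ 4) z i := by
  have c0 : g3 F (τ ∘ (0:Fin 5).succAbove) z = CFm F (τ 1) (τ 2) (τ 3) (τ 4) z := rfl
  have c1 : g3 F (τ ∘ (1:Fin 5).succAbove) z = CFm F (τ 0) (τ 2) (τ 3) (τ 4) z := rfl
  have c2 : g3 F (τ ∘ (2:Fin 5).succAbove) z = CFm F (τ 0) (τ 1) (τ 3) (τ 4) z := rfl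
  have c3 : g3 F (τ ∘ (3:Fin 5).succAbove) z = CFm F (τ 0) (τ 1) (τ 2) (τ 4) z := rfl
  have c4 : g3 F (τ ∘ (4:Fin 5).succAbove) z = CFm F (τ 0) (τ 1) (τ 2) (τ 3) z := rfl
  show (∑ l : Fin 5, ((-1:ℤ)^(l:ℕ)) • g3 F (τ ∘ l.succAbove) z) = _
  rw [Fin.sum_univ_five, c0, c1, c2, c3, c4]
  simp only [show ((0:Fin 5):ℕ) = 0 from rfl, show ((1:Fin 5):ℕ) = 1 from rfl,
    show ((2:Fin 5):ℕ) = 2 from rfl, show ((3:Fin 5):ℕ) = 3 from rfl,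
    show ((4:Fin 5):ℕ) = 4 from rfl]
  funext i j
  have h := hCF (τ 0) (τ 1) (τ 2) (τ 3) (τ 4) z i j
  simp only [Pi.add_apply, Pi.smul_apply, smul_eq_mul]
  norm_num
  linarith

end Bilinear
end AuxLemmas

section CupLemmas
variable {ι Z : Type*} {n : ℕ} (F : ι → ι → ι → Z → Fin n → ℤ)

/-- The residual term `ψ ∪ (F_i ∪ F_j − F_j ∪ F_i)`. -/
def Eterm {k : ℕ} (ψ : Cochain ι Z (Fin n → Fin n → ℤ) k) : Cochain ι Z ℤ (k + 4) :=
  fun σ z => ∑ i : Fin n, ∑ j : Fin n,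
    if i < j then
      ψ (fun i' : Fin (k + 1) => σ (Fin.castLE (by omega) i')) z i j *
        (F (σ ⟨k, by omega⟩) (σ ⟨k + 1, by omega⟩) (σ ⟨k + 2, by omega⟩) z i *
            F (σ ⟨k + 2, by omega⟩) (σ ⟨k + 3, by omega⟩) (σ ⟨k + 4, by omega⟩) z j
          - F (σ ⟨k, by omega⟩) (σ ⟨k + 1, by omega⟩) (σ ⟨k + 2, by omega⟩) z j *
            F (σ ⟨k + 2, by omega⟩) (σ ⟨k + 3, by omega⟩) (σ ⟨k + 4, by omega⟩) z i)
    else 0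

lemma L_A (hF : ∀ (a b c d : ι) (z : Z) (l : Fin n),
      F b c d z l - F a c d z l + F a b d z l - F a b c z l = 0)
    {k : ℕ} (φ : Cochain ι Z (Fin n → ℤ) k) :
    cechD (cup1v φ F) = cup1v (cechD φ) F := by
  funext σ z
  have h0 : cup1v φ F = (fun τ z =>
      m1 (φ (fun i : Fin (k+1) => τ (Fin.castLE (by omega) i)) z)
        ((g2 F) (fun i : Fin 3 => τ (⟨k + i, by omega⟩ : Fin (k + 2 + 1))) z)) := rfl
  rw [h0, leibniz m1 φ (g2 F) σ z, dg2 F hF _ z, AddMonoidHom.map_zero, smul_zero, add_zero]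
  rfl

lemma L_B (hF : ∀ (a b c d : ι) (z : Z) (l : Fin n),
      F b c d z l - F a c d z l + F a b d z l - F a b c z l = 0)
    {k : ℕ} (ψ : Cochain ι Z (Fin n → Fin n → ℤ) k) :
    cechD (cup1m ψ F) = cup1m (cechD ψ) F := by
  funext σ z
  have h0 : cup1m ψ F = (fun τ z =>
      m2 (ψ (fun i : Fin (k+1) => τ (Fin.castLE (by omega) i)) z)
        ((g2 F) (fun i : Fin 3 => τ (⟨k + i, by omega⟩ : Fin (k + 2 + 1))) z)) := rfl
  rw [h0, leibniz m2 ψ (g2 F) σ z, dg2 F hF _ z, AddMonoidHom.map_zero, smul_zero, add_zero]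
  rfl

lemma L_C (hCF : ∀ (a b c d e : ι) (z : Z) (i j : Fin n),
      CFm F b c d e z i j - CFm F a c d e z i j + CFm F a b d e z i j
          - CFm F a b c e z i j + CFm F a b c d z i j
        = F a b c z i * F c d e z j - F a b c z j * F c d e z i)
    {k : ℕ} (ψ : Cochain ι Z (Fin n → Fin n → ℤ) k) :
    cechD (cup2m ψ F) = cup2m (cechD ψ) F + ((-1:ℤ)^k) • Eterm F ψ := by
  funext σ z
  have h0 : cup2m ψ F = (fun τ z =>
      m3 (ψ (fun i : Fin (k+1) => τ (Fin.castLE (by omega) i)) z)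
        ((g3 F) (fun i : Fin 4 => τ (⟨k + i, by omega⟩ : Fin (k + 3 + 1))) z)) := rfl
  rw [h0, leibniz m3 ψ (g3 F) σ z, dg3 F hCF _ z]
  rfl

lemma sum_delta (ψv : Fin n → Fin n → ℤ) (A B : Fin n → ℤ) :
    (∑ l : Fin n, (∑ i : Fin n, ∑ j : Fin n,
        if i < j then ψv i j * (A i * (if l = j then 1 else 0) - (if l = i then 1 else 0) * A j)
        else 0) * B l)
      = ∑ i : Fin n, ∑ j : Fin n, if i < j then ψv i j * (A i * B j - A j * B i) else 0 := by
  simp only [Finset.sum_mul]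
  rw [Finset.sum_comm]
  refine Finset.sum_congr rfl fun i _ => ?_
  rw [Finset.sum_comm]
  refine Finset.sum_congr rfl fun j _ => ?_
  by_cases hij : i < j
  · simp only [hij, if_true]
    have hne : i ≠ j := ne_of_lt hij
    have step : ∀ l : Fin n,
        ψv i j * (A i * (if l = j then 1 else 0) - (if l = i then 1 else 0) * A j) * B l
          = (if l = j then ψv i j * A i * B l else 0)
            - (if l = i then ψv i j * A j * B l else 0) := by
      intro l
      split_ifs with h1 h2 <;> ring
    rw [Finset.sum_congr rfl (fun l _ => step l), Finset.sum_sub_distrib,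
      Finset.sum_ite_eq' Finset.univ j, Finset.sum_ite_eq' Finset.univ i]
    simp only [Finset.mem_univ, if_true]
    ring
  · simp [hij]

lemma L_D {k : ℕ} (ψ : Cochain ι Z (Fin n → Fin n → ℤ) k) :
    cup1v (cup1m ψ F) F = Eterm F ψ := by
  funext σ z
  exact sum_delta
    (fun i j => ψ (fun i' : Fin (k+1) => σ (Fin.castLE (by omega) i')) z i j)
    (F (σ ⟨k, by omega⟩) (σ ⟨k + 1, by omega⟩) (σ ⟨k + 2, by omega⟩) z)
    (F (σ ⟨k + 2, by omega⟩) (σ ⟨k + 3, by omega⟩) (σ ⟨k + 4, by omega⟩) z)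

-- linearity lemmas
lemma cechD_add {A : Type*} [AddCommGroup A] {k : ℕ} (x y : Cochain ι Z A k) :
    cechD (x + y) = cechD x + cechD y := by
  funext σ z
  simp [cechD, smul_add, Finset.sum_add_distrib]

lemma cechD_smul {A : Type*} [AddCommGroup A] {k : ℕ} (c : ℤ) (x : Cochain ι Z A k) :
    cechD (c • x) = c • cechD x := by
  funext σ z
  simp [cechD, Finset.smul_sum, smul_comm c]

lemma cup1v_add {k : ℕ} (x y : Cochain ι Z (Fin n → ℤ) k) :
    cup1v (x + y) F = cup1v x F + cup1v y F := by
  funext σ z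
  simp [cup1v, add_mul, Finset.sum_add_distrib]

lemma cup1v_smul {k : ℕ} (c : ℤ) (x : Cochain ι Z (Fin n → ℤ) k) :
    cup1v (c • x) F = c • cup1v x F := by
  funext σ z
  simp only [cup1v, Pi.smul_apply, smul_eq_mul, Finset.mul_sum]
  refine Finset.sum_congr rfl fun l _ => ?_
  ring

lemma cup1m_add {k : ℕ} (x y : Cochain ι Z (Fin n → Fin n → ℤ) k) :
    cup1m (x + y) F = cup1m x F + cup1m y F := by
  funext σ z w
  simp only [cup1m, Pi.add_apply, ← Finset.sum_add_distrib]
  refine Finset.sum_congr rfl fun i _ => ?_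
  refine Finset.sum_congr rfl fun j _ => ?_
  split_ifs <;> ring

lemma cup1m_smul {k : ℕ} (c : ℤ) (x : Cochain ι Z (Fin n → Fin n → ℤ) k) :
    cup1m (c • x) F = c • cup1m x F := by
  funext σ z w
  simp only [cup1m, Pi.smul_apply, smul_eq_mul, Finset.mul_sum]
  refine Finset.sum_congr rfl fun i _ => ?_
  refine Finset.sum_congr rfl fun j _ => ?_
  split_ifs <;> ring

lemma cup2m_add {k : ℕ} (x y : Cochain ι Z (Fin n → Fin n → ℤ) k) :
    cup2m (x + y) F = cup2m x F + cup2m y F := by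
  funext σ z
  simp only [cup2m, Pi.add_apply, ← Finset.sum_add_distrib]
  refine Finset.sum_congr rfl fun i _ => ?_
  refine Finset.sum_congr rfl fun j _ => ?_
  split_ifs <;> ring

lemma cup2m_smul {k : ℕ} (c : ℤ) (x : Cochain ι Z (Fin n → Fin n → ℤ) k) :
    cup2m (c • x) F = c • cup2m x F := by
  funext σ z
  simp only [cup2m, Pi.smul_apply, smul_eq_mul, Finset.mul_sum]
  refine Finset.sum_congr rfl fun i _ => ?_
  refine Finset.sum_congr rfl fun j _ => ?_
  split_ifs <;> ring

end CupLemmas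

/- STATEMENT 1: `D_F ∘ D_F = 0`, given that `F` is a 2-cocycle and that
`∂̌ C(F)_{ij} = F_i ∪ F_j − F_j ∪ F_i`. -/
theorem stmt_1 {ι Z : Type*} {n : ℕ} (K : ℕ)
    (F : ι → ι → ι → Z → Fin n → ℤ)
    (hF : ∀ (a b c d : ι) (z : Z) (l : Fin n),
      F b c d z l - F a c d z l + F a b d z l - F a b c z l = 0)
    (hCF : ∀ (a b c d e : ι) (z : Z) (i j : Fin n),
      CFm F b c d e z i j - CFm F a c d e z i j + CFm F a b d e z i j
          - CFm F a b c e z i j + CFm F a b c d z i j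
        = F a b c z i * F c d e z j - F a b c z j * F c d e z i)
    (t : Cochain ι Z ℤ (K + 2) × Cochain ι Z (Fin n → ℤ) (K + 1) ×
         Cochain ι Z (Fin n → Fin n → ℤ) K) :
    DF (K + 1) F (DF K F t) = 0 := by
  obtain ⟨φ1, φ2, φ3⟩ := t
  have p2 : ((-1:ℤ))^(K+2) = (-1:ℤ)^K := by rw [pow_add]; norm_num
  have p3 : ((-1:ℤ))^(K+3) = -(-1:ℤ)^K := by rw [pow_add]; norm_num
  have p4 : ((-1:ℤ))^(K+1+3) = (-1:ℤ)^K := by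
    rw [show K+1+3 = K+4 from rfl, pow_add]; norm_num
  have p3' : ((-1:ℤ))^(K+1+2) = -(-1:ℤ)^K := by
    rw [show K+1+2 = K+3 from rfl, pow_add]; norm_num
  refine Prod.ext ?_ (Prod.ext ?_ ?_)
  · show cechD (cechD φ1 + ((-1:ℤ)^(K+3)) • cup1v φ2 F + ((-1:ℤ)^(K+3)) • cup2m φ3 F)
        + ((-1:ℤ)^(K+1+3)) • cup1v (cechD φ2 + ((-1:ℤ)^(K+2)) • cup1m φ3 F) F
        + ((-1:ℤ)^(K+1+3)) • cup2m (cechD φ3) F = 0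
    rw [cechD_add, cechD_add, cechD_smul, cechD_smul, cechD_cechD,
      L_A F hF φ2, L_C F hCF φ3, cup1v_add, cup1v_smul, L_D F φ3]
    rw [p2, p3, p4]
    module
  · show cechD (cechD φ2 + ((-1:ℤ)^(K+2)) • cup1m φ3 F)
        + ((-1:ℤ)^(K+1+2)) • cup1m (cechD φ3) F = 0
    rw [cechD_add, cechD_smul, cechD_cechD, L_B F hF φ3, zero_add]
    rw [p2, p3']
    module
  · show cechD (cechD φ3) = 0
    exact cechD_cechD φ3
end

section
/- Suppose w is a unitary in U(H), and u^m, v^m (m ∈ ℤ^n) are families of unitaries in U(H) such that Ad(w u^m) = Ad(v^m w) for all m ∈ ℤ^n, and such that m ↦ Ad(u^m) and m ↦ Ad(v^m) are homomorphisms ℤ^n → PU(H), with u^{m+m'} = c(m,m') u^m u^{m'} and v^{m+m'} = c'(m,m') v^m v^{m'} for central scalars c, c'. If moreover any two of u^{e_i} commute up to the same scalars as the corresponding v^{e_i} (i.e., the commutation scalars f_{ij} agree), and u, v are defined multiplicatively from u^{e_i}, v^{e_i} as u^m = (u^{e_1})^{m_1}⋯(u^{e_n})^{m_n}, then the map m ↦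 v^m w (u^m)^* w^* takes values in the scalars 𝕋·1 and is a group homomorphism from ℤ^n to 𝕋. -/
section Aux

variable {G : Type*} [Group G]
open scoped IsMulCommutative

/-- If `b * a = z * (a * b)` with `z` central, then powers commute up to `z^(p*q)`. -/
lemma powB (a b z : G) (hz : z ∈ Subgroup.center G) (h : b * a = z * (a * b))
    (p q : ℤ) : b ^ q * a ^ p = z ^ (p * q) * (a ^ p * b ^ q) := by
  have hcz : ∀ x : G, Commute z x := fun x => (Subgroup.mem_center_iff.mp hz x).symm
  -- step 1 : SemiconjBy b a (z*a)
  have hs : SemiconjBy b a (z * a) := by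
    show b * a = z * a * b
    rw [h, mul_assoc]
  have hs1 : b * a ^ p = z ^ p * a ^ p * b := by
    have := hs.zpow_right p
    rw [SemiconjBy, (hcz a).mul_zpow] at this
    exact this
  -- step 2 : SemiconjBy (a^p) b (z^(-p) * b)
  have hs2 : SemiconjBy (a ^ p) b (z ^ (-p) * b) := by
    show a ^ p * b = z ^ (-p) * b * a ^ p
    rw [mul_assoc, hs1]
    rw [← mul_assoc, ← mul_assoc, ← zpow_add, neg_add_cancel, zpow_zero, one_mul]
  have := hs2.zpow_right q
  rw [SemiconjBy, ((hcz b).zpow_left (-p)).mul_zpow, ← zpow_mul] at this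
  have h2 : a ^ p * b ^ q = z ^ (-p * q) * (b ^ q * a ^ p) := by
    rw [this, mul_assoc]
  rw [h2, ← mul_assoc, ← zpow_add]
  simp

/-- Moving `a` left across a product of elements each commuting with `a` up to a central scalar. -/
lemma prodA : ∀ {n : ℕ} (g : Fin n → G) (a : G) (z : Fin n → Subgroup.center G),
    (∀ i, g i * a = (z i : G) * (a * g i)) →
    (List.ofFn g).prod * a = ((∏ i, z i : Subgroup.center G) : G) * (a * (List.ofFn g).prod)
  | 0, g, a, z, _ => by simp
  | n+1, g, a, z, h => by
    have ih := prodA (fun i => g i.succ) a (fun i => z i.succ) (fun i => h i.succ)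
    have hc : ∀ x : G, ((∏ i : Fin n, z i.succ : Subgroup.center G) : G) * x
        = x * ((∏ i : Fin n, z i.succ : Subgroup.center G) : G) := by
      intro x
      exact (Subgroup.mem_center_iff.mp (∏ i : Fin n, z i.succ : Subgroup.center G).2 x).symm
    rw [List.ofFn_succ, List.prod_cons, mul_assoc, ih, Fin.prod_univ_succ]
    push_cast
    rw [← mul_assoc (g 0), ← hc (g 0), ← hc ((z 0 : G)), mul_assoc _ (g 0), mul_assoc _ ((z 0 : G))]
    congr 1
    rw [← mul_assoc (g 0), h 0]
    group

lemma abstr (A B P Q C ZZ : G) (hZ : ∀ x : G, x * ZZ = ZZ * x)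
    (hC : ∀ x : G, x * C = C * x) (hs : P * B = ZZ * (B * P)) :
    (A * B) * (C * (P * Q)) = (C * ZZ⁻¹) * (A * P * (B * Q)) := by
  calc (A * B) * (C * (P * Q)) = ((A * B) * C) * (P * Q) := by group
    _ = (C * (A * B)) * (P * Q) := by rw [hC (A * B)]
    _ = C * ZZ⁻¹ * ((ZZ * A) * ((B * P) * Q)) := by group
    _ = C * ZZ⁻¹ * ((A * ZZ) * ((B * P) * Q)) := by rw [hZ A]
    _ = C * ZZ⁻¹ * (A * ((ZZ * (B * P)) * Q)) := by group
    _ = C * ZZ⁻¹ * (A * ((P * B) * Q)) := by rw [hs]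
    _ = (C * ZZ⁻¹) * (A * P * (B * Q)) := by group

lemma mainC : ∀ (n : ℕ) (f : Fin n → Fin n → Subgroup.center G) (m m' : Fin n → ℤ),
    ∃ c : Subgroup.center G, ∀ g : Fin n → G,
      (∀ i j : Fin n, i < j → g j * g i = (f i j : G) * (g i * g j)) →
      (List.ofFn fun i => g i ^ (m i + m' i)).prod
        = (c : G) * ((List.ofFn fun i => g i ^ m i).prod
            * (List.ofFn fun i => g i ^ m' i).prod)
  | 0, f, m, m' => ⟨1, by simp⟩
  | n+1, f, m, m' => by
    obtain ⟨c', hc'⟩ := mainC n (fun i j => f i.succ j.succ)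
      (fun i => m i.succ) (fun i => m' i.succ)
    set Z : Subgroup.center G := ∏ i : Fin n, (f 0 i.succ) ^ (m' 0 * m i.succ) with hZdef
    refine ⟨c' * Z⁻¹, fun g hg => ?_⟩
    have hIH := hc' (fun i => g i.succ)
      (fun i j hij => hg i.succ j.succ (Fin.strictMono_succ hij))
    have hswap : (List.ofFn fun i : Fin n => g i.succ ^ m i.succ).prod * g 0 ^ m' 0
        = (Z : G) * (g 0 ^ m' 0 * (List.ofFn fun i : Fin n => g i.succ ^ m i.succ).prod) := by
      have := prodA (fun i : Fin n => g i.succ ^ m i.succ) (g 0 ^ m' 0)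
        (fun i : Fin n => (f 0 i.succ) ^ (m' 0 * m i.succ))
        (fun i => by
          have := powB (g 0) (g i.succ) (f 0 i.succ) (f 0 i.succ).2
            (hg 0 i.succ (Fin.succ_pos i)) (m' 0) (m i.succ)
          simpa using this)
      simpa [hZdef] using this
    have hZc : ∀ x : G, x * (Z : G) = (Z : G) * x :=
      fun x => Subgroup.mem_center_iff.mp Z.2 x
    have hCc : ∀ x : G, x * (c' : G) = (c' : G) * x :=
      fun x => Subgroup.mem_center_iff.mp c'.2 x
    simp only [List.ofFn_succ, List.prod_cons, Fin.val_succ]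
    rw [hIH, zpow_add]
    push_cast
    exact abstr _ _ _ _ _ _ hZc hCc hswap

lemma abstr2 (Vm Vm' Um Um' w C T : G)
    (hC : ∀ x : G, Commute C x) (hT : ∀ x : G, Commute T x)
    (h2 : Vm' * w * Um'⁻¹ = T * w) :
    C * (Vm * Vm') * w * (C * (Um * Um'))⁻¹ * w⁻¹
      = (Vm * w * Um⁻¹ * w⁻¹) * (Vm' * w * Um'⁻¹ * w⁻¹) := by
  have hCi : C⁻¹ * w⁻¹ = w⁻¹ * C⁻¹ := ((hC w⁻¹).inv_left).eq
  have hlast : Vm' * w * Um'⁻¹ * w⁻¹ = T := by rw [h2]; group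
  calc C * (Vm * Vm') * w * (C * (Um * Um'))⁻¹ * w⁻¹
      = C * ((Vm * Vm') * w * Um'⁻¹ * Um⁻¹ * (C⁻¹ * w⁻¹)) := by group
    _ = C * ((Vm * Vm') * w * Um'⁻¹ * Um⁻¹ * (w⁻¹ * C⁻¹)) := by rw [hCi]
    _ = ((Vm * Vm') * w * Um'⁻¹ * Um⁻¹ * (w⁻¹ * C⁻¹)) * C := by
        rw [(hC ((Vm * Vm') * w * Um'⁻¹ * Um⁻¹ * (w⁻¹ * C⁻¹))).eq]
    _ = Vm * ((Vm' * w * Um'⁻¹) * (Um⁻¹ * w⁻¹)) := by group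
    _ = Vm * ((T * w) * (Um⁻¹ * w⁻¹)) := by rw [h2]
    _ = Vm * (T * (w * Um⁻¹ * w⁻¹)) := by group
    _ = Vm * ((w * Um⁻¹ * w⁻¹) * T) := by rw [(hT (w * Um⁻¹ * w⁻¹)).eq]
    _ = (Vm * w * Um⁻¹ * w⁻¹) * T := by group
    _ = (Vm * w * Um⁻¹ * w⁻¹) * (Vm' * w * Um'⁻¹ * w⁻¹) := by rw [hlast]

end Aux

/- STATEMENT 6: `w` a unitary, `u^m`, `v^m` built multiplicatively from generators
with the same central commutation scalars `f_{ij}`, such that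
`Ad(w u^m) = Ad(v^m w)` (i.e. `w u^m (v^m w)⁻¹` is central).  Then
`m ↦ v^m w (u^m)⁻¹ w⁻¹` takes values in the central scalars and is a group
homomorphism `ℤⁿ → 𝕋`.  `G` abstracts `U(H)` with its central circle. -/
theorem stmt_6 {G : Type*} [Group G] {n : ℕ} (u v : Fin n → G) (w : G)
    (f : Fin n → Fin n → Subgroup.center G)
    (hu : ∀ i j : Fin n, i < j → u j * u i = (f i j : G) * (u i * u j))
    (hv : ∀ i j : Fin n, i < j → v j * v i = (f i j : G) * (v i * v j))
    (U V : (Fin n → ℤ) → G)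
    (hU : ∀ m, U m = (List.ofFn fun i => u i ^ m i).prod)
    (hV : ∀ m, V m = (List.ofFn fun i => v i ^ m i).prod)
    (hAd : ∀ m, w * U m * (V m * w)⁻¹ ∈ Subgroup.center G) :
    (∀ m, V m * w * (U m)⁻¹ * w⁻¹ ∈ Subgroup.center G) ∧
    (∀ m m', V (m + m') * w * (U (m + m'))⁻¹ * w⁻¹
      = (V m * w * (U m)⁻¹ * w⁻¹) * (V m' * w * (U m')⁻¹ * w⁻¹)) := by
  have h1 : ∀ m, V m * w * (U m)⁻¹ * w⁻¹ = (w * U m * (V m * w)⁻¹)⁻¹ := fun m => by group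
  refine ⟨fun m => ?_, fun m m' => ?_⟩
  · rw [h1]; exact (Subgroup.center G).inv_mem (hAd m)
  · obtain ⟨c, hc⟩ := mainC n f m m'
    have hUc : U (m + m') = (c : G) * (U m * U m') := by
      rw [hU, hU, hU]
      simpa [Pi.add_apply] using hc u hu
    have hVc : V (m + m') = (c : G) * (V m * V m') := by
      rw [hV, hV, hV]
      simpa [Pi.add_apply] using hc v hv
    set T : G := (w * U m' * (V m' * w)⁻¹)⁻¹ with hTdef
    have hTmem : T ∈ Subgroup.center G := (Subgroup.center G).inv_mem (hAd m')
    have hT : ∀ x : G, Commute T x := fun x =>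
      ((Subgroup.mem_center_iff.mp hTmem x).symm)
    have hC : ∀ x : G, Commute (c : G) x := fun x =>
      ((Subgroup.mem_center_iff.mp c.2 x).symm)
    have h2 : V m' * w * (U m')⁻¹ = T * w := by
      have := h1 m'
      rw [← hTdef] at this
      calc V m' * w * (U m')⁻¹ = (V m' * w * (U m')⁻¹ * w⁻¹) * w := by group
        _ = T * w := by rw [this]
    rw [hUc, hVc]
    exact abstr2 (V m) (V m') (U m) (U m') w (c : G) T hC hT h2
end

section
/- Let s be a ℝ^n-valued Čech 1-cochain on a cover {W_λ} with s_{λλ} = 0, and g: Z → M_n^u(ℝ) continuous. Define the 2-cochain φ^{20}_{λ0λ1λ2}(z) := [Σ_{i<j} g(z)_{ij}(s_{λ0λ1}(z)_i s_{λ1λ2}(z)_j − (∂̌s)_{λ0λ1λ2}(z)_i s_{λ0λ2}(z)_j)]_{ℝ/ℤ}. Then the Čech differential ∂̌φ^{20} on quadruple overlaps equals [Σ_{i<j} g(z)_{ij}((∂̌s)_{λ0λ1λ2}(z)_i (∂̌s)_{λ0λ2λ3}(z)_j − (∂̌s)_{λ1λ2λ3}(z)_i (∂̌s)_{λ0λ1λ3}(z)_j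 + (∂̌s)_{λ1λ2λ3}(z)_i s_{λ0λ1}(z)_j − s_{λ0λ1}(z)_i (∂̌s)_{λ1λ2λ3}(z)_j)]_{ℝ/ℤ}. -/
/- STATEMENT 9: for a continuous ℝⁿ-valued Čech 1-cochain `s` with `s_{λλ} = 0`,
`F := ∂̌s`, and continuous `g : Z → M_n^u(ℝ)`, the 𝕋-valued 2-cochain
`φ^{20}_{λ₀λ₁λ₂}(z) = [Σ_{i<j} g(z)_{ij}(s_{λ₀λ₁,i} s_{λ₁λ₂,j} − F_{λ₀λ₁λ₂,i} s_{λ₀λ₂,j})]`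
has Čech differential
`[Σ_{i<j} g(z)_{ij}(F_{λ₀λ₁λ₂,i}F_{λ₀λ₂λ₃,j} − F_{λ₁λ₂λ₃,i}F_{λ₀λ₁λ₃,j}
  + F_{λ₁λ₂λ₃,i}s_{λ₀λ₁,j} − s_{λ₀λ₁,i}F_{λ₁λ₂λ₃,j})]` in `𝕋 = ℝ/ℤ`. -/
theorem stmt_9 {ι Z : Type*} [TopologicalSpace Z] {n : ℕ}
    (s : ι → ι → Z → Fin n → ℝ)
    (hs0 : ∀ (a : ι) (z : Z), s a a z = 0)
    (hscont : ∀ a b : ι, Continuous (s a b))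
    (g : Z → Matrix (Fin n) (Fin n) ℝ) (hgcont : Continuous g)
    (hgu : ∀ (z : Z) (i j : Fin n), ¬ i < j → g z i j = 0)
    (F : ι → ι → ι → Z → Fin n → ℝ)
    (hF : ∀ (a b c : ι) (z : Z) (l : Fin n),
      F a b c z l = s b c z l - s a c z l + s a b z l)
    (φ : ι → ι → ι → Z → AddCircle (1 : ℝ))
    (hφ : ∀ (a b c : ι) (z : Z), φ a b c z =
      ((∑ i : Fin n, ∑ j : Fin n, if i < j then g z i j *
          (s a b z i * s b c z j - F a b c z i * s a c z j) else 0 : ℝ) :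
        AddCircle (1 : ℝ)))
    (a b c d : ι) (z : Z) :
    φ b c d z - φ a c d z + φ a b d z - φ a b c z =
      ((∑ i : Fin n, ∑ j : Fin n, if i < j then g z i j *
          (F a b c z i * F a c d z j - F b c d z i * F a b d z j
            + F b c d z i * s a b z j - s a b z i * F b c d z j) else 0 : ℝ) :
        AddCircle (1 : ℝ)) := by
  simp only [hφ]
  rw [← AddCircle.coe_sub, ← AddCircle.coe_add, ← AddCircle.coe_sub]
  congr 1
  rw [← Finset.sum_sub_distrib, ← Finset.sum_add_distrib, ← Finset.sum_sub_distrib]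
  refine Finset.sum_congr rfl fun i _ => ?_
  rw [← Finset.sum_sub_distrib, ← Finset.sum_add_distrib, ← Finset.sum_sub_distrib]
  refine Finset.sum_congr rfl fun j _ => ?_
  by_cases h : i < j
  · simp only [h, if_true, hF]; ring
  · simp only [h, if_false]; ring
end

section
/- Let s be an ℝ^n-valued Čech 1-cochain with F := ∂̌s integer-valued (F ∈ Ž²(W, ℤ^n)), and g: Z → M_n^u(ℝ) continuous. Define the triple φ(g) = (φ^{20}, φ^{11}, φ^{02}) with φ^{02}_{λ0}(z)_{ij} := [g(z)_{ij}]_{ℝ/ℤ}, φ^{11}_{λ0λ1}(m,z) := [Σ_{i<j} g(z)_{ij}(m_i s_{λ0λ1}(z)_j − s_{λ0λ1}(z)_i m_j)]_{ℝ/ℤ}, and φ^{20}_{λ0λ1λ2}(z) := [Σ_{i<j} g(z)_{ij}(s_{λ0λ1}(z)_i s_{λ1λ2}(z)_j − F_{λ0λ1λ2}(z)_i s_{λ0λ2}(z)_j)]_{ℝ/ℤ}. Then φ(g) is a cocycle in the dimensionally reduced complex: D_F(φ^{20}, φ^{11}, φ^{02}) = 0. -/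
/- STATEMENT 10: for a continuous ℝⁿ-valued 1-cochain `s` with `s_{λλ} = 0` and
`F := ∂̌s` integer valued, and continuous `g : Z → M_n^u(ℝ)`, the triple
`φ(g) = (φ^{20}, φ^{11}, φ^{02})` defined below is a cocycle of the (𝕋-valued)
dimensionally reduced complex: all three components of `D_F φ(g)` vanish. -/
theorem stmt_10 {ι Z : Type*} [TopologicalSpace Z] {n : ℕ}
    (s : ι → ι → Z → Fin n → ℝ)
    (hs0 : ∀ (a : ι) (z : Z), s a a z = 0)
    (hscont : ∀ a b : ι, Continuous (s a b))
    (g : Z → Matrix (Fin n) (Fin n) ℝ) (hgcont : Continuous g)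
    (hgu : ∀ (z : Z) (i j : Fin n), ¬ i < j → g z i j = 0)
    -- F = ∂̌s takes values in ℤⁿ
    (F : ι → ι → ι → Z → Fin n → ℤ)
    (hF : ∀ (a b c : ι) (z : Z) (l : Fin n),
      (F a b c z l : ℝ) = s b c z l - s a c z l + s a b z l)
    (φ20 : ι → ι → ι → Z → AddCircle (1 : ℝ))
    (hφ20 : ∀ (a b c : ι) (z : Z), φ20 a b c z =
      ((∑ i : Fin n, ∑ j : Fin n, if i < j then g z i j *
          (s a b z i * s b c z j - (F a b c z i : ℝ) * s a c z j) else 0 : ℝ) :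
        AddCircle (1 : ℝ)))
    (φ11 : ι → ι → (Fin n → ℤ) → Z → AddCircle (1 : ℝ))
    (hφ11 : ∀ (a b : ι) (m : Fin n → ℤ) (z : Z), φ11 a b m z =
      ((∑ i : Fin n, ∑ j : Fin n, if i < j then g z i j *
          ((m i : ℝ) * s a b z j - s a b z i * (m j : ℝ)) else 0 : ℝ) :
        AddCircle (1 : ℝ)))
    (φ02 : ι → Z → Matrix (Fin n) (Fin n) (AddCircle (1 : ℝ)))
    (hφ02 : ∀ (a : ι) (z : Z) (i j : Fin n),
      φ02 a z i j = ((g z i j : ℝ) : AddCircle (1 : ℝ))) :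
    -- degree (1,2) component of D_F φ(g): ∂̌φ^{02} = 0
    (∀ (a b : ι) (z : Z) (i j : Fin n), φ02 b z i j - φ02 a z i j = 0) ∧
    -- degree (2,1) component: ∂̌φ^{11} + φ^{02} ∪₁ F = 0
    (∀ (a b c : ι) (m : Fin n → ℤ) (z : Z),
      φ11 b c m z - φ11 a c m z + φ11 a b m z
        + ((∑ i : Fin n, ∑ j : Fin n, if i < j then g z i j *
            ((F a b c z i : ℝ) * (m j : ℝ) - (m i : ℝ) * (F a b c z j : ℝ))
            else 0 : ℝ) : AddCircle (1 : ℝ)) = 0) ∧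
    -- degree (3,0) component: ∂̌φ^{20} − φ^{11} ∪₁ F − φ^{02} ∪₂ C(F) = 0
    (∀ (a b c d : ι) (z : Z),
      φ20 b c d z - φ20 a c d z + φ20 a b d z - φ20 a b c z
        - φ11 a b (F b c d z) z
        - ((∑ i : Fin n, ∑ j : Fin n, if i < j then g z i j *
            ((F a b c z i * F a c d z j - F b c d z i * F a b d z j : ℤ) : ℝ)
            else 0 : ℝ) : AddCircle (1 : ℝ)) = 0) := by
  refine ⟨?_, ?_, ?_⟩
  · intro a b z i j
    rw [hφ02, hφ02, sub_self]
  · intro a b c m z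
    rw [hφ11, hφ11, hφ11, ← AddCircle.coe_sub, ← AddCircle.coe_add,
      ← AddCircle.coe_add]
    rw [show (0 : AddCircle (1:ℝ)) = ((0:ℝ) : AddCircle (1:ℝ)) from rfl]
    congr 1
    rw [← Finset.sum_sub_distrib, ← Finset.sum_add_distrib, ← Finset.sum_add_distrib]
    refine Finset.sum_eq_zero fun i _ => ?_
    rw [← Finset.sum_sub_distrib, ← Finset.sum_add_distrib, ← Finset.sum_add_distrib]
    refine Finset.sum_eq_zero fun j _ => ?_
    split_ifs with h
    · simp only [hF]; ring
    · ring
  · intro a b c d z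
    rw [hφ20, hφ20, hφ20, hφ20, hφ11, ← AddCircle.coe_sub, ← AddCircle.coe_add,
      ← AddCircle.coe_sub, ← AddCircle.coe_sub, ← AddCircle.coe_sub]
    rw [show (0 : AddCircle (1:ℝ)) = ((0:ℝ) : AddCircle (1:ℝ)) from rfl]
    congr 1
    rw [← Finset.sum_sub_distrib, ← Finset.sum_add_distrib, ← Finset.sum_sub_distrib,
      ← Finset.sum_sub_distrib, ← Finset.sum_sub_distrib]
    refine Finset.sum_eq_zero fun i _ => ?_
    rw [← Finset.sum_sub_distrib, ← Finset.sum_add_distrib, ← Finset.sum_sub_distrib,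
      ← Finset.sum_sub_distrib, ← Finset.sum_sub_distrib]
    refine Finset.sum_eq_zero fun j _ => ?_
    split_ifs with h
    · push_cast
      simp only [hF]; ring
    · ring
end

section
/- Let s be a Čech 1-cochain on a cover of Z with values in ℝ^n such that s_{λλ} = 0 and F := ∂̌s is integer-valued, and let g: Z → M_n^u(ℝ) be continuous. Then the ℝ-valued 2-cochain ψ_{λ0λ1λ2}(z) := Σ_{1≤i<j≤n} g(z)_{ij}(s_{λ0λ1}(z)_i s_{λ1λ2}(z)_j − F_{λ0λ1λ2}(z)_i s_{λ0λ2}(z)_j) satisfies: (∂̌ψ)_{λ0λ1λ2λ3}(z) − Σ_{i<j} g(z)_{ij}(F_{λ0λ1λ2}(z)_i F_{λ0λ2λ3}(z)_j − F_{λ1λ2λ3}(z)_i F_{λ0λ1λ3}(z)_j) − Σ_{i<j} g(z)_{ij}(F_{λ1λ2λ3}(z)_i s_{λ0λ1}(z)_j − s_{λ0λ1}(z)_i F_{λ1λ2λ3}(z)_j) = 0, i.e., the image of g under the composite C(Z, M_n^u(ℝ)) → ℍ²_F(W, 𝒮) → ℍ³_F(W, ℤ) vanishes at the level of the first (degree-(3,0))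 component of the connecting zig-zag. -/
/- STATEMENT 11: for an ℝⁿ-valued 1-cochain `s` with `s_{λλ} = 0` and `F := ∂̌s`
integer valued, and `g : Z → M_n^u(ℝ)` continuous, the ℝ-valued 2-cochain
`ψ_{λ₀λ₁λ₂}(z) = Σ_{i<j} g(z)_{ij}(s_{λ₀λ₁,i} s_{λ₁λ₂,j} − F_{λ₀λ₁λ₂,i} s_{λ₀λ₂,j})`
satisfies the exact identity
`∂̌ψ − Σ g_{ij}(F_{λ₀λ₁λ₂,i}F_{λ₀λ₂λ₃,j} − F_{λ₁λ₂λ₃,i}F_{λ₀λ₁λ₃,j})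
    − Σ g_{ij}(F_{λ₁λ₂λ₃,i}s_{λ₀λ₁,j} − s_{λ₀λ₁,i}F_{λ₁λ₂λ₃,j}) = 0`,
i.e. the degree-(3,0) component of the connecting zig-zag applied to the image
of `g` vanishes. -/
theorem stmt_11 {ι Z : Type*} [TopologicalSpace Z] {n : ℕ}
    (s : ι → ι → Z → Fin n → ℝ)
    (hs0 : ∀ (a : ι) (z : Z), s a a z = 0)
    (hscont : ∀ a b : ι, Continuous (s a b))
    (g : Z → Matrix (Fin n) (Fin n) ℝ) (hgcont : Continuous g)
    (hgu : ∀ (z : Z) (i j : Fin n), ¬ i < j → g z i j = 0)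
    (F : ι → ι → ι → Z → Fin n → ℤ)
    (hF : ∀ (a b c : ι) (z : Z) (l : Fin n),
      (F a b c z l : ℝ) = s b c z l - s a c z l + s a b z l)
    (ψ : ι → ι → ι → Z → ℝ)
    (hψ : ∀ (a b c : ι) (z : Z), ψ a b c z =
      ∑ i : Fin n, ∑ j : Fin n, if i < j then g z i j *
        (s a b z i * s b c z j - (F a b c z i : ℝ) * s a c z j) else 0)
    (a b c d : ι) (z : Z) :
    (ψ b c d z - ψ a c d z + ψ a b d z - ψ a b c z)
      - (∑ i : Fin n, ∑ j : Fin n, if i < j then g z i j *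
          ((F a b c z i : ℝ) * (F a c d z j : ℝ)
            - (F b c d z i : ℝ) * (F a b d z j : ℝ)) else 0)
      - (∑ i : Fin n, ∑ j : Fin n, if i < j then g z i j *
          ((F b c d z i : ℝ) * s a b z j - s a b z i * (F b c d z j : ℝ)) else 0)
      = 0 := by
  simp only [hψ, ← Finset.sum_sub_distrib, ← Finset.sum_add_distrib]
  apply Finset.sum_eq_zero; intro i _
  apply Finset.sum_eq_zero; intro j _
  split
  · simp only [hF]
    ring
  · ring
end

section
/- Let g: Z → M_n^u(ℝ) be continuous and s a continuous ℝ^n-valued 1-cochain on a cover of Z with s_{λλ}=0 and F := ∂̌s integer-valued. Then the M_n^u(𝕋)-valued 1-cochain obtained as the Čech differential of z ↦ [g(z)]_{ℝ/ℤ} vanishes (since g is globally defined), and the middle-component identity holds: ∂̌φ^{11} + (φ^{02} ∪₁ F) = 0 in Č²(W, Hom(ℤ^n, 𝕋)), where φ^{11}_{λ0λ1}(m,z) := [Σ_{i<j} g(z)_{ij}(m_i s_{λ0λ1}(z)_j − s_{λ0λ1}(z)_i m_j)]_{ℝ/ℤ} and (φ^{02} ∪₁ F)_{λ0λ1λ2}(m,z)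 := [Σ_{i<j} g(z)_{ij}(F_{λ0λ1λ2}(z)_i m_j − m_i F_{λ0λ1λ2}(z)_j)]_{ℝ/ℤ}. -/
/- STATEMENT 18: with `g : Z → M_n^u(ℝ)` continuous and `s` a continuous ℝⁿ-valued
1-cochain with `s_{λλ}=0` and `F := ∂̌s` integer valued: the Čech differential of
the globally defined 0-cochain `z ↦ [g(z)]_{ℝ/ℤ}` vanishes, and the middle
component identity `∂̌φ^{11} + φ^{02} ∪₁ F = 0` holds, where
`φ^{11}_{λ₀λ₁}(m,z) = [Σ_{i<j} g(z)_{ij}(m_i s_{λ₀λ₁,j} − s_{λ₀λ₁,i} m_j)]` and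
`(φ^{02} ∪₁ F)_{λ₀λ₁λ₂}(m,z) = [Σ_{i<j} g(z)_{ij}(F_{λ₀λ₁λ₂,i} m_j − m_i F_{λ₀λ₁λ₂,j})]`. -/
theorem stmt_18 {ι Z : Type*} [TopologicalSpace Z] {n : ℕ}
    (s : ι → ι → Z → Fin n → ℝ)
    (hs0 : ∀ (a : ι) (z : Z), s a a z = 0)
    (hscont : ∀ a b : ι, Continuous (s a b))
    (g : Z → Matrix (Fin n) (Fin n) ℝ) (hgcont : Continuous g)
    (hgu : ∀ (z : Z) (i j : Fin n), ¬ i < j → g z i j = 0)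
    (F : ι → ι → ι → Z → Fin n → ℤ)
    (hF : ∀ (a b c : ι) (z : Z) (l : Fin n),
      (F a b c z l : ℝ) = s b c z l - s a c z l + s a b z l)
    (φ02 : ι → Z → Matrix (Fin n) (Fin n) (AddCircle (1 : ℝ)))
    (hφ02 : ∀ (a : ι) (z : Z) (i j : Fin n),
      φ02 a z i j = ((g z i j : ℝ) : AddCircle (1 : ℝ)))
    (φ11 : ι → ι → (Fin n → ℤ) → Z → AddCircle (1 : ℝ))
    (hφ11 : ∀ (a b : ι) (m : Fin n → ℤ) (z : Z), φ11 a b m z =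
      ((∑ i : Fin n, ∑ j : Fin n, if i < j then g z i j *
          ((m i : ℝ) * s a b z j - s a b z i * (m j : ℝ)) else 0 : ℝ) :
        AddCircle (1 : ℝ))) :
    -- ∂̌ of the global 0-cochain [g] vanishes
    (∀ (a b : ι) (z : Z) (i j : Fin n), φ02 b z i j - φ02 a z i j = 0) ∧
    -- ∂̌φ^{11} + φ^{02} ∪₁ F = 0 in Č²(W, Hom(ℤⁿ, 𝕋))
    (∀ (a b c : ι) (m : Fin n → ℤ) (z : Z),
      φ11 b c m z - φ11 a c m z + φ11 a b m z
        + ((∑ i : Fin n, ∑ j : Fin n, if i < j then g z i j *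
            ((F a b c z i : ℝ) * (m j : ℝ) - (m i : ℝ) * (F a b c z j : ℝ))
            else 0 : ℝ) : AddCircle (1 : ℝ)) = 0) := by
  constructor
  · intro a b z i j
    rw [hφ02, hφ02, sub_self]
  · intro a b c m z
    rw [hφ11, hφ11, hφ11,
      ← QuotientAddGroup.mk_sub, ← QuotientAddGroup.mk_add, ← QuotientAddGroup.mk_add]
    have h : (∑ i : Fin n, ∑ j : Fin n, if i < j then g z i j *
          ((m i : ℝ) * s b c z j - s b c z i * (m j : ℝ)) else 0)
        - (∑ i : Fin n, ∑ j : Fin n, if i < j then g z i j *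
          ((m i : ℝ) * s a c z j - s a c z i * (m j : ℝ)) else 0)
        + (∑ i : Fin n, ∑ j : Fin n, if i < j then g z i j *
          ((m i : ℝ) * s a b z j - s a b z i * (m j : ℝ)) else 0)
        + (∑ i : Fin n, ∑ j : Fin n, if i < j then g z i j *
          ((F a b c z i : ℝ) * (m j : ℝ) - (m i : ℝ) * (F a b c z j : ℝ)) else 0) = 0 := by
      simp only [← Finset.sum_sub_distrib, ← Finset.sum_add_distrib]
      refine Finset.sum_eq_zero fun i _ => Finset.sum_eq_zero fun j _ => ?_
      split_ifs with hij
      · rw [hF, hF]; ring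
      · simp
    rw [h, QuotientAddGroup.mk_zero]
end
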